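/- Relation (D): Let u be a 0-grassmannian affine permutation and let a < b < c < d be integers with b ≡ c (mod n), a ≡ d (mod n), and (b − a) + (d − c) = n. Then the composite u·t_{a,b}·t_{c,d} is defined if and only if the composite u·t_{d−n,c}·t_{b−n,a} is defined, and in that case the two resulting affine permutations are equal. -/

import Mathlib

open Function

/-- The affine transposition `t_{a,b}` of period `n`: it exchanges `a + m*n` and
`b + m*n` for every `m : ℤ` and fixes all other integers. -/
def affT (n a b : ℤ) : ℤ → ℤ := fun i =>
  if (i - a) % n = 0 then i - a + b
  else if (i - b) % n = 0 then i - b + a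
  else i

/-- `u` is an affine permutation of period `n`: a bijection of `ℤ` with
`u (i + n) = u i + n` and `∑_{i=1}^{n} u i = n (n+1) / 2`. -/
def IsAffinePerm (n : ℤ) (u : ℤ → ℤ) : Prop :=
  Function.Bijective u ∧ (∀ i : ℤ, u (i + n) = u i + n) ∧
    ∑ i ∈ Finset.Icc (1 : ℤ) n, u i = n * (n + 1) / 2

/-- The operator `t_{a,b}` is defined at `u`:
`u a ≤ 0 < u b` and for every `a < i < b`, either `u i < u a` or `u i > u b`. -/
def DefinedAt (u : ℤ → ℤ) (a b : ℤ) : Prop :=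
  u a ≤ 0 ∧ 0 < u b ∧ ∀ i : ℤ, a < i → i < b → u i < u a ∨ u b < u i

/-- `u` is 0-grassmannian: the positions of the values `1, 2, …, n` under `u`
appear in increasing order, i.e. `u⁻¹ 1 < u⁻¹ 2 < ⋯ < u⁻¹ n`. -/
def IsGrassmannian (n : ℤ) (u : ℤ → ℤ) : Prop :=
  ∀ i j p q : ℤ, 1 ≤ i → i < j → j ≤ n → u p = i → u q = j → p < q

/-- The composite `u · t_{a,b} · t_{c,d}` is defined. -/
def Def2 (n : ℤ) (u : ℤ → ℤ) (a b c d : ℤ) : Prop :=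
  DefinedAt u a b ∧ DefinedAt (u ∘ affT n a b) c d

/-- The composite `u · t_{a₁,b₁} · t_{a₂,b₂} · t_{a₃,b₃}` is defined. -/
def Def3 (n : ℤ) (u : ℤ → ℤ) (a₁ b₁ a₂ b₂ a₃ b₃ : ℤ) : Prop :=
  DefinedAt u a₁ b₁ ∧ DefinedAt (u ∘ affT n a₁ b₁) a₂ b₂ ∧
    DefinedAt ((u ∘ affT n a₁ b₁) ∘ affT n a₂ b₂) a₃ b₃

lemma emod_ne_zero_of_between (n x p : ℤ) (h1 : n * p < x) (h2 : x < n * p + n) :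
    x % n ≠ 0 := by
  have hn : 0 < n := by linarith
  have hx : x % n = x - n * p := by
    have h3 : x = (x - n * p) + n * p := by ring
    conv_lhs => rw [h3]
    rw [Int.add_mul_emod_self_left, Int.emod_eq_of_lt (by linarith) (by linarith)]
  omega

lemma affT_shift (n a b p : ℤ) : affT n (a + n * p) (b + n * p) = affT n a b := by
  funext i
  unfold affT
  have h1 : (i - (a + n * p)) % n = (i - a) % n := by
    have h : i - (a + n * p) = (i - a) + n * (-p) := by ring
    rw [h, Int.add_mul_emod_self_left]
  have h2 : (i - (b + n * p)) % n = (i - b) % n := by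
    have h : i - (b + n * p) = (i - b) + n * (-p) := by ring
    rw [h, Int.add_mul_emod_self_left]
  rw [h1, h2]
  split_ifs <;> ring

lemma affT_fix (n a b i : ℤ) (h1 : (i - a) % n ≠ 0) (h2 : (i - b) % n ≠ 0) :
    affT n a b i = i := by
  unfold affT; rw [if_neg h1, if_neg h2]

lemma affT_A (n a b p : ℤ) : affT n a b (a + n * p) = b + n * p := by
  unfold affT
  have h1 : (a + n * p - a) % n = 0 := by
    have h : a + n * p - a = n * p := by ring
    rw [h, Int.mul_emod_right]
  rw [if_pos h1]; ring

lemma affT_B (n a b p : ℤ) (hne : (b - a) % n ≠ 0) :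
    affT n a b (b + n * p) = a + n * p := by
  unfold affT
  have h1 : (b + n * p - a) % n ≠ 0 := by
    have h : b + n * p - a = (b - a) + n * p := by ring
    rw [h, Int.add_mul_emod_self_left]; exact hne
  have h2 : (b + n * p - b) % n = 0 := by
    have h : b + n * p - b = n * p := by ring
    rw [h, Int.mul_emod_right]
  rw [if_neg h1, if_pos h2]; ring

theorem stmt7 (k : ℤ) (hk : 1 ≤ k) (u : ℤ → ℤ)
    (hu : IsAffinePerm (k + 1) u) (hg : IsGrassmannian (k + 1) u)
    (a b c d : ℤ) (hab : a < b) (hbc : b < c) (hcd : c < d)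
    (hbcmod : b % (k + 1) = c % (k + 1)) (hadmod : a % (k + 1) = d % (k + 1))
    (hsum : (b - a) + (d - c) = k + 1) :
    (Def2 (k + 1) u a b c d ↔ Def2 (k + 1) u (d - (k + 1)) c (b - (k + 1)) a) ∧
      (Def2 (k + 1) u a b c d →
        (u ∘ affT (k + 1) a b) ∘ affT (k + 1) c d =
          (u ∘ affT (k + 1) (d - (k + 1)) c) ∘ affT (k + 1) (b - (k + 1)) a) := by
  obtain ⟨-, hstep, -⟩ := hu
  set n : ℤ := k + 1 with hndef
  have hn : 0 < n := by omega
  obtain ⟨p, hp⟩ : n ∣ c - b := Int.ModEq.dvd hbcmod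
  have hp1 : 1 ≤ p := by
    have h0 : 0 < n * p := by linarith
    by_contra h
    push_neg at h
    have : n * p ≤ 0 := mul_nonpos_of_nonneg_of_nonpos (le_of_lt hn) (by omega)
    linarith
  have hnp : 0 < n * p := mul_pos hn (by omega)
  have hc : c = b + n * p := by linarith
  have hd : d = a + n * (p + 1) := by
    have h1 : d - a = n + (c - b) := by omega
    have h2 : n * (p + 1) = n * p + n := by ring
    linarith
  have hba : 0 < b - a := by omega
  have hban : b - a < n := by omega
  have hdn : d - n = a + n * p := by rw [hd]; ring
  have hne : (b - a) % n ≠ 0 :=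
    emod_ne_zero_of_between n (b - a) 0 (by simpa using hba) (by simpa using hban)
  -- periodicity by multiples of n
  have hper : ∀ m i : ℤ, u (i + n * m) = u i + n * m := by
    intro m
    induction m using Int.induction_on with
    | zero => simp
    | succ m ih =>
      intro i
      have h1 : i + n * (m + 1) = (i + n * m) + n := by ring
      rw [h1, hstep, ih]; ring
    | pred m ih =>
      intro i
      have h2 := hstep (i + n * (-(m : ℤ) - 1))
      have h1 : (i + n * (-(m : ℤ) - 1)) + n = i + n * (-(m : ℤ)) := by ring
      rw [h1, ih] at h2
      have h3 : n * (-(m : ℤ) - 1) = n * (-(m : ℤ)) - n := by ring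
      linarith
  -- the two transpositions coincide with the original ones
  have E1 : affT n (d - n) c = affT n a b := by
    rw [hdn, hc]; exact affT_shift n a b p
  have E2 : affT n (b - n) a = affT n c d := by
    have h1 : b - n = c + n * (-(p + 1)) := by rw [hc]; ring
    have h2 : a = d + n * (-(p + 1)) := by rw [hd]; ring
    calc affT n (b - n) a = affT n (c + n * (-(p + 1))) (d + n * (-(p + 1))) := by
          rw [← h1, ← h2]
      _ = affT n c d := affT_shift n c d (-(p + 1))
  -- pointwise values
  have hudn : u (d - n) = u a + n * p := by rw [hdn]; exact hper p a
  have huc : u c = u b + n * p := by rw [hc]; exact hper p b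
  have hvc : (u ∘ affT n a b) c = u a + n * p := by
    rw [Function.comp_apply, hc, affT_B n a b p hne, hper p a]
  have hvd : (u ∘ affT n a b) d = u b + n * p + n := by
    rw [Function.comp_apply, hd, affT_A n a b (p + 1), hper (p + 1) b]; ring
  have hvbn : (u ∘ affT n a b) (b - n) = u a - n := by
    have h1 : b - n = b + n * (-1) := by ring
    rw [Function.comp_apply, h1, affT_B n a b (-1) hne, hper (-1) a]; ring
  have hva : (u ∘ affT n a b) a = u b := by
    have h := affT_A n a b 0
    simp only [mul_zero, add_zero] at h
    rw [Function.comp_apply, h]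
  -- fixed points on the open windows
  have W1 : ∀ i : ℤ, c < i → i < d → (u ∘ affT n a b) i = u i := by
    intro i h1 h2
    rw [Function.comp_apply, affT_fix]
    · apply emod_ne_zero_of_between n (i - a) p
      · rw [hc] at h1; linarith
      · rw [hd] at h2
        have h3 : n * (p + 1) = n * p + n := by ring
        linarith
    · apply emod_ne_zero_of_between n (i - b) p
      · rw [hc] at h1; linarith
      · rw [hd] at h2
        have h3 : n * (p + 1) = n * p + n := by ring
        linarith
  have W2 : ∀ i : ℤ, b - n < i → i < a → (u ∘ affT n a b) i = u i := by
    intro i h1 h2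
    rw [Function.comp_apply, affT_fix]
    · apply emod_ne_zero_of_between n (i - a) (-1)
      · have h3 : n * (-1) = -n := by ring
        linarith
      · have h3 : n * (-1) + n = 0 := by ring
        linarith
    · apply emod_ne_zero_of_between n (i - b) (-1)
      · have h3 : n * (-1) = -n := by ring
        linarith
      · have h3 : n * (-1) + n = 0 := by ring
        linarith
  -- the common reformulation
  set P : Prop := (u a + n * p ≤ 0 ∧ 0 < u b ∧
      (∀ j : ℤ, a < j → j < b → u j < u a ∨ u b < u j) ∧
      (∀ j : ℤ, b < j → j < a + n → u j < u a ∨ u b + n < u j)) with hPdef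
  have hL : Def2 n u a b c d ↔ P := by
    constructor
    · rintro ⟨⟨ha0, hb0, hwin1⟩, ⟨hc0, _, hwin2⟩⟩
      rw [hvc] at hc0
      refine ⟨hc0, hb0, hwin1, ?_⟩
      intro j hj1 hj2
      have hi1 : c < j + n * p := by rw [hc]; linarith
      have hi2 : j + n * p < d := by
        rw [hd]
        have h3 : n * (p + 1) = n * p + n := by ring
        linarith
      have hji := hwin2 (j + n * p) hi1 hi2
      rw [W1 _ hi1 hi2, hvc, hvd, hper p j] at hji
      rcases hji with h | h
      · left; linarith
      · right; linarith
    · rintro ⟨h1, h2, h3, h4⟩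
      refine ⟨⟨by linarith, h2, h3⟩, ?_, ?_, ?_⟩
      · rw [hvc]; exact h1
      · rw [hvd]; linarith
      · intro i hi1 hi2
        rw [W1 _ hi1 hi2, hvc, hvd]
        have hj1 : b < i - n * p := by rw [hc] at hi1; linarith
        have hj2 : i - n * p < a + n := by
          rw [hd] at hi2
          have h5 : n * (p + 1) = n * p + n := by ring
          linarith
        have hui : u i = u (i - n * p) + n * p := by
          have h6 := hper p (i - n * p)
          have h7 : i - n * p + n * p = i := by ring
          rw [h7] at h6
          exact h6
        rcases h4 (i - n * p) hj1 hj2 with h | h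
        · left; linarith
        · right; linarith
  have hR : Def2 n u (d - n) c (b - n) a ↔ P := by
    unfold Def2
    rw [E1]
    constructor
    · rintro ⟨⟨h1, _, hwin1⟩, ⟨_, h4, hwin2⟩⟩
      rw [hudn] at h1
      rw [hva] at h4
      refine ⟨h1, h4, ?_, ?_⟩
      · intro j hj1 hj2
        have hi1 : d - n < j + n * p := by rw [hdn]; linarith
        have hi2 : j + n * p < c := by rw [hc]; linarith
        have hji := hwin1 (j + n * p) hi1 hi2
        rw [hudn, huc, hper p j] at hji
        rcases hji with h | h
        · left; linarith
        · right; linarith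
      · intro j hj1 hj2
        have hi1 : b - n < j - n := by linarith
        have hi2 : j - n < a := by linarith
        have hji := hwin2 (j - n) hi1 hi2
        rw [W2 _ hi1 hi2, hvbn, hva] at hji
        have hji2 : u (j - n) = u j - n := by
          have h6 := hper (-1) j
          have h7 : j + n * (-1) = j - n := by ring
          have h8 : n * (-1) = -n := by ring
          rw [h7, h8] at h6
          linarith
        rcases hji with h | h
        · left; linarith
        · right; linarith
    · rintro ⟨h1, h2, h3, h4⟩
      refine ⟨⟨by rw [hudn]; exact h1, by rw [huc]; linarith, ?_⟩,
        by rw [hvbn]; linarith, by rw [hva]; exact h2, ?_⟩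
      · intro i hi1 hi2
        rw [hudn, huc]
        have hj1 : a < i - n * p := by rw [hdn] at hi1; linarith
        have hj2 : i - n * p < b := by rw [hc] at hi2; linarith
        have hui : u i = u (i - n * p) + n * p := by
          have h6 := hper p (i - n * p)
          have h7 : i - n * p + n * p = i := by ring
          rw [h7] at h6
          exact h6
        rcases h3 (i - n * p) hj1 hj2 with h | h
        · left; linarith
        · right; linarith
      · intro i hi1 hi2
        rw [W2 _ hi1 hi2, hvbn, hva]
        have hj1 : b < i + n := by linarith
        have hj2 : i + n < a + n := by linarith
        have hui : u (i + n) = u i + n := hstep i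
        rcases h4 (i + n) hj1 hj2 with h | h
        · left; linarith
        · right; linarith
  refine ⟨hL.trans hR.symm, fun _ => ?_⟩
  rw [E1, E2]
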